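/- For n ≥ 4 and m ≥ 1, the torus/cylinder graph C_n □ P_m has domination number at most 3 if and only if (n = 4 and m ≤ 3) or (n = 5 and m ≤ 2) or (6 ≤ n ≤ 9 and m = 1). -/

import Mathlib

open scoped Classical

noncomputable def domNum {V : Type*} [Fintype V] (G : SimpleGraph V) : ℕ :=
  sInf {k | ∃ X : Finset V, X.card = k ∧ ∀ v : V, v ∈ X ∨ ∃ w ∈ X, G.Adj v w}

section aux
open SimpleGraph Finset

lemma domNum_le_three_iff_finset {V : Type*} [Fintype V] (G : SimpleGraph V) :
    domNum G ≤ 3 ↔ ∃ X : Finset V, X.card ≤ 3 ∧ ∀ v : V, v ∈ X ∨ ∃ w ∈ X, G.Adj v w := by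
  have hne : {k | ∃ X : Finset V, X.card = k ∧ ∀ v : V, v ∈ X ∨ ∃ w ∈ X, G.Adj v w}.Nonempty :=
    ⟨(Finset.univ : Finset V).card, Finset.univ, rfl, fun v => Or.inl (Finset.mem_univ v)⟩
  constructor
  · intro h
    obtain ⟨X, hc, hd⟩ := Nat.sInf_mem hne
    exact ⟨X, hc ▸ h, hd⟩
  · rintro ⟨X, hle, hd⟩
    exact le_trans (Nat.sInf_le ⟨X, rfl, hd⟩) hle

lemma domNum_le_three_iff_triple {V : Type*} [Fintype V] [Nonempty V] (G : SimpleGraph V) :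
    domNum G ≤ 3 ↔ ∃ a b c : V, ∀ v : V,
      (v = a ∨ v = b ∨ v = c) ∨ ∃ w : V, (w = a ∨ w = b ∨ w = c) ∧ G.Adj v w := by
  rw [domNum_le_three_iff_finset]
  constructor
  · rintro ⟨X, hle, hd⟩
    inhabit V
    have hsub : ∃ a b c : V, ∀ v ∈ X, v = a ∨ v = b ∨ v = c := by
      interval_cases h : X.card
      · exact ⟨default, default, default, fun v hv => by
          simp [Finset.card_eq_zero.mp h] at hv⟩
      · obtain ⟨a, rfl⟩ := Finset.card_eq_one.mp h
        exact ⟨a, a, a, fun v hv => by simp_all⟩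
      · obtain ⟨a, b, -, rfl⟩ := Finset.card_eq_two.mp h
        exact ⟨a, b, b, fun v hv => by simp_all⟩
      · obtain ⟨a, b, c, -, -, -, rfl⟩ := Finset.card_eq_three.mp h
        exact ⟨a, b, c, fun v hv => by simp_all⟩
    obtain ⟨a, b, c, hsub⟩ := hsub
    refine ⟨a, b, c, fun v => ?_⟩
    rcases hd v with h | ⟨w, hw, hadj⟩
    · exact Or.inl (hsub v h)
    · exact Or.inr ⟨w, hsub w hw, hadj⟩
  · rintro ⟨a, b, c, h⟩
    refine ⟨{a, b, c}, Finset.card_le_three, fun v => ?_⟩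
    rcases h v with h | ⟨w, hw, hadj⟩
    · exact Or.inl (by simp only [Finset.mem_insert, Finset.mem_singleton]; tauto)
    · exact Or.inr ⟨w, by simp only [Finset.mem_insert, Finset.mem_singleton]; tauto, hadj⟩

lemma path_degree_le (m : ℕ) (y : Fin m) : (pathGraph m).degree y ≤ 2 := by
  have hsub : (pathGraph m).neighborFinset y ⊆
      Finset.univ.filter (fun w : Fin m => w.val + 1 = y.val ∨ y.val + 1 = w.val) := by
    intro w hw
    rw [mem_neighborFinset, pathGraph_adj] at hw
    simp only [Finset.mem_filter, Finset.mem_univ, true_and]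
    tauto
  refine le_trans (Finset.card_le_card hsub) ?_
  refine le_trans (Finset.card_le_card_of_injOn (fun w => (w : ℕ))
    (t := ({y.val - 1, y.val + 1} : Finset ℕ)) ?_ ?_) Finset.card_le_two
  · intro w hw
    simp only [Finset.mem_coe, Finset.mem_filter, Finset.mem_univ, true_and] at hw
    simp only [Finset.mem_coe, Finset.mem_insert, Finset.mem_singleton]
    omega
  · intro a _ b _ hab
    exact Fin.val_injective hab

lemma cycle_degree_le (n : ℕ) (hn : 2 ≤ n) (x : Fin n) : (cycleGraph n).degree x ≤ 2 := by
  obtain ⟨k, rfl⟩ : ∃ k, n = k + 2 := ⟨n - 2, by omega⟩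
  rw [cycleGraph_degree_two_le]
  exact Finset.card_le_two

lemma count_big (n m : ℕ) (hn : 2 ≤ n) (h16 : 16 ≤ n * m) :
    ¬ ∃ X : Finset (Fin n × Fin m), X.card ≤ 3 ∧ ∀ v, v ∈ X ∨
      ∃ w ∈ X, (SimpleGraph.boxProd (cycleGraph n) (pathGraph m)).Adj v w := by
  rintro ⟨X, hle, hd⟩
  set G := SimpleGraph.boxProd (cycleGraph n) (pathGraph m) with hG
  have hdeg : ∀ x : Fin n × Fin m, G.degree x ≤ 4 := by
    intro x
    show (SimpleGraph.boxProd (cycleGraph n) (pathGraph m)).degree x ≤ 4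
    rw [degree_boxProd]
    exact add_le_add (cycle_degree_le n hn x.1) (path_degree_le m x.2)
  have hsub : (Finset.univ : Finset (Fin n × Fin m)) ⊆
      X.biUnion (fun x => insert x (G.neighborFinset x)) := by
    intro v _
    rcases hd v with h | ⟨w, hw, hadj⟩
    · exact Finset.mem_biUnion.mpr ⟨v, h, Finset.mem_insert_self _ _⟩
    · exact Finset.mem_biUnion.mpr ⟨w, hw,
        Finset.mem_insert_of_mem ((mem_neighborFinset _ _ _).mpr hadj.symm)⟩
  have h1 := Finset.card_le_card hsub
  have h2 := Finset.card_biUnion_le (s := X) (t := fun x => insert x (G.neighborFinset x))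
  have h3 : ∑ x ∈ X, (insert x (G.neighborFinset x)).card ≤ ∑ _x ∈ X, 5 := by
    refine Finset.sum_le_sum fun x _ => ?_
    refine le_trans (Finset.card_insert_le _ _) ?_
    have := hdeg x
    rw [SimpleGraph.degree] at this
    omega
  rw [Finset.sum_const, smul_eq_mul] at h3
  have h4 : (Finset.univ : Finset (Fin n × Fin m)).card = n * m := by simp
  rw [h4] at h1
  linarith

def cyadj (n i k : ℕ) : Bool := (i+1) % n == k || (k+1) % n == i
def paadj (j l : ℕ) : Bool := j+1 == l || l+1 == j
def adjB (n : ℕ) (v1 v2 w1 w2 : ℕ) : Bool :=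
  (cyadj n v1 w1 && v2 == w2) || (v1 == w1 && paadj v2 w2)
def domB (n m : ℕ) : Bool :=
  (List.range n).any fun a1 => (List.range m).any fun a2 =>
  (List.range n).any fun b1 => (List.range m).any fun b2 =>
  (List.range n).any fun c1 => (List.range m).any fun c2 =>
  (List.range n).all fun v1 => (List.range m).all fun v2 =>
    (v1 == a1 && v2 == a2) || (v1 == b1 && v2 == b2) || (v1 == c1 && v2 == c2) ||
    adjB n v1 v2 a1 a2 || adjB n v1 v2 b1 b2 || adjB n v1 v2 c1 c2

lemma fin_sub_val_one {n : ℕ} (hn : 2 ≤ n) (a b : Fin n) :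
    (b - a).val = 1 ↔ (a.val + 1) % n = b.val := by
  have hA := a.isLt
  have hB := b.isLt
  rw [Fin.sub_def]
  simp only
  have h1 : (n - a.val + b.val) % n =
      if n - a.val + b.val < n then n - a.val + b.val else n - a.val + b.val - n := by
    split_ifs with h
    · exact Nat.mod_eq_of_lt h
    · rw [Nat.mod_eq_sub_mod (by omega), Nat.mod_eq_of_lt (by omega)]
  have h2 : (a.val + 1) % n = if a.val + 1 < n then a.val + 1 else 0 := by
    split_ifs with h
    · exact Nat.mod_eq_of_lt h
    · have : a.val + 1 = n := by omega
      simp [this]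
  rw [h1, h2]
  split_ifs <;> omega

lemma adjB_iff {n m : ℕ} (hn : 2 ≤ n) (v w : Fin n × Fin m) :
    (SimpleGraph.boxProd (cycleGraph n) (pathGraph m)).Adj v w ↔
      adjB n v.1.val v.2.val w.1.val w.2.val = true := by
  rw [boxProd_adj, cycleGraph_adj', pathGraph_adj]
  unfold adjB cyadj paadj
  simp only [Bool.or_eq_true, Bool.and_eq_true, beq_iff_eq, ← Fin.val_eq_val]
  rw [fin_sub_val_one hn v.1 w.1, fin_sub_val_one hn w.1 v.1]
  tauto

lemma domNum_iff_domB (n m : ℕ) (hn : 2 ≤ n) (hm : 1 ≤ m) :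
    domNum (SimpleGraph.boxProd (cycleGraph n) (pathGraph m)) ≤ 3 ↔ domB n m = true := by
  haveI : Nonempty (Fin n × Fin m) := ⟨⟨⟨0, by omega⟩, ⟨0, by omega⟩⟩⟩
  rw [domNum_le_three_iff_triple]
  unfold domB
  simp only [List.any_eq_true, List.all_eq_true, List.mem_range, Bool.or_eq_true,
    Bool.and_eq_true, beq_iff_eq]
  constructor
  · rintro ⟨a, b, c, h⟩
    refine ⟨a.1.val, a.1.isLt, a.2.val, a.2.isLt, b.1.val, b.1.isLt, b.2.val, b.2.isLt,
      c.1.val, c.1.isLt, c.2.val, c.2.isLt, fun v1 hv1 v2 hv2 => ?_⟩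
    rcases h (⟨v1, hv1⟩, ⟨v2, hv2⟩) with h1 | ⟨w, hw, hadj⟩
    · rcases h1 with h1 | h1 | h1 <;> rw [← h1] <;> tauto
    · have hb := (adjB_iff hn _ _).mp hadj
      rcases hw with rfl | rfl | rfl <;> tauto
  · rintro ⟨a1, ha1, a2, ha2, b1, hb1, b2, hb2, c1, hc1, c2, hc2, h⟩
    refine ⟨(⟨a1, ha1⟩, ⟨a2, ha2⟩), (⟨b1, hb1⟩, ⟨b2, hb2⟩), (⟨c1, hc1⟩, ⟨c2, hc2⟩),
      fun v => ?_⟩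
    rcases h v.1.val v.1.isLt v.2.val v.2.isLt with
      ((((⟨h1, h2⟩ | ⟨h1, h2⟩) | ⟨h1, h2⟩) | hadj) | hadj) | hadj
    · exact Or.inl (Or.inl (Prod.ext_iff.mpr ⟨Fin.ext h1, Fin.ext h2⟩))
    · exact Or.inl (Or.inr (Or.inl (Prod.ext_iff.mpr ⟨Fin.ext h1, Fin.ext h2⟩)))
    · exact Or.inl (Or.inr (Or.inr (Prod.ext_iff.mpr ⟨Fin.ext h1, Fin.ext h2⟩)))
    · exact Or.inr ⟨_, Or.inl rfl, (adjB_iff hn v (⟨a1, ha1⟩, ⟨a2, ha2⟩)).mpr hadj⟩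
    · exact Or.inr ⟨_, Or.inr (Or.inl rfl), (adjB_iff hn v (⟨b1, hb1⟩, ⟨b2, hb2⟩)).mpr hadj⟩
    · exact Or.inr ⟨_, Or.inr (Or.inr rfl), (adjB_iff hn v (⟨c1, hc1⟩, ⟨c2, hc2⟩)).mpr hadj⟩

end aux

set_option maxHeartbeats 4000000 in
theorem domNum_cylinder_le_three_iff (n m : ℕ) (hn : 4 ≤ n) (hm : 1 ≤ m) :
    domNum (SimpleGraph.boxProd (SimpleGraph.cycleGraph n) (SimpleGraph.pathGraph m)) ≤ 3 ↔
      (n = 4 ∧ m ≤ 3) ∨ (n = 5 ∧ m ≤ 2) ∨ (6 ≤ n ∧ n ≤ 9 ∧ m = 1) := by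
  by_cases h16 : 16 ≤ n * m
  · constructor
    · intro h
      rw [domNum_le_three_iff_finset] at h
      exact absurd h (count_big n m (by omega) h16)
    · rintro (⟨rfl, hm3⟩ | ⟨rfl, hm2⟩ | ⟨h6, h9, rfl⟩) <;> omega
  · have h1 : 4 * m ≤ n * m := Nat.mul_le_mul_right m hn
    have h2 : n * 1 ≤ n * m := Nat.mul_le_mul_left n hm
    have hm3 : m ≤ 3 := by omega
    have hn15 : n ≤ 15 := by omega
    rw [domNum_iff_domB n m (by omega) hm]
    interval_cases n <;> interval_cases m <;> first
      | (exfalso; omega)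
      | decide
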